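/- arXiv:1801.01389 — 2 statements merged into one kernel-verified Lean document; each statement's English description precedes it below -/
import Mathlib

section
/- For a₀ > 0 and ℓ > 0, let k > 0 be the smallest positive solution of k N ℓ = tan(k(Nℓ − a₀)), where N is large enough that a₀/(Nℓ) is sufficiently small. Then there exists C > 0 such that (3a₀/(Nℓ)³)(1 + (9/5)(a₀/(Nℓ)) − C (a₀/(Nℓ))²) ≤ k² ≤ (3a₀/(Nℓ)³)(1 + (9/5)(a₀/(Nℓ)) + C (a₀/(Nℓ))²). -/
open Real

private lemma chain_step {F F' : ℝ → ℝ} (hd : ∀ x, HasDerivAt F (F' x) x)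
    (h0 : F 0 = 0) (h' : ∀ x, 0 ≤ x → 0 ≤ F' x) : ∀ x, 0 ≤ x → 0 ≤ F x := by
  intro x hx
  have hm : MonotoneOn F (Set.Ici 0) := by
    apply monotoneOn_of_deriv_nonneg (convex_Ici 0)
    · exact fun y _ => ((hd y).differentiableAt).continuousAt.continuousWithinAt
    · exact fun y _ => ((hd y).differentiableAt).differentiableWithinAt
    · intro y hy
      rw [interior_Ici] at hy
      rw [(hd y).deriv]
      exact h' y hy.le
  have := hm (Set.self_mem_Ici) hx hx
  rwa [h0] at this

private lemma sin_ge_taylor3 : ∀ x : ℝ, 0 ≤ x → x - x ^ 3 / 6 ≤ sin x := by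
  have := chain_step (F := fun x => Real.sin x - (x - x ^ 3 / 6))
    (F' := fun x => Real.cos x - (1 - x ^ 2 / 2)) ?_ (by norm_num) ?_
  · intro x hx; linarith [this x hx]
  · intro x
    have h := ((Real.hasDerivAt_sin x).sub ((hasDerivAt_id x).sub ((hasDerivAt_pow 3 x).div_const 6)))
    refine h.congr_deriv ?_; push_cast; ring
  · intro x _; linarith [Real.one_sub_sq_div_two_le_cos (x := x)]

private lemma cos_le_taylor4 : ∀ x : ℝ, 0 ≤ x → cos x ≤ 1 - x ^ 2 / 2 + x ^ 4 / 24 := by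
  have := chain_step (F := fun x => (1 - x ^ 2 / 2 + x ^ 4 / 24) - Real.cos x)
    (F' := fun x => (Real.sin x - (x - x ^ 3 / 6))) ?_ (by norm_num) ?_
  · intro x hx; linarith [this x hx]
  · intro x
    have h := ((((hasDerivAt_const x (1:ℝ)).sub ((hasDerivAt_pow 2 x).div_const 2)).add
      ((hasDerivAt_pow 4 x).div_const 24)).sub (Real.hasDerivAt_cos x))
    refine h.congr_deriv ?_; push_cast; ring
  · intro x hx; linarith [sin_ge_taylor3 x hx]

private lemma sin_le_taylor5 : ∀ x : ℝ, 0 ≤ x → sin x ≤ x - x ^ 3 / 6 + x ^ 5 / 120 := by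
  have := chain_step (F := fun x => (x - x ^ 3 / 6 + x ^ 5 / 120) - Real.sin x)
    (F' := fun x => (1 - x ^ 2 / 2 + x ^ 4 / 24) - Real.cos x) ?_ (by norm_num) ?_
  · intro x hx; linarith [this x hx]
  · intro x
    have h := ((((hasDerivAt_id x).sub ((hasDerivAt_pow 3 x).div_const 6)).add
      ((hasDerivAt_pow 5 x).div_const 120)).sub (Real.hasDerivAt_sin x))
    refine h.congr_deriv ?_; push_cast; ring
  · intro x hx; linarith [cos_le_taylor4 x hx]

private lemma cos_ge_taylor6 : ∀ x : ℝ, 0 ≤ x → 1 - x ^ 2 / 2 + x ^ 4 / 24 - x ^ 6 / 720 ≤ cos x := by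
  have := chain_step (F := fun x => Real.cos x - (1 - x ^ 2 / 2 + x ^ 4 / 24 - x ^ 6 / 720))
    (F' := fun x => (x - x ^ 3 / 6 + x ^ 5 / 120) - Real.sin x) ?_ (by norm_num) ?_
  · intro x hx; linarith [this x hx]
  · intro x
    have h := ((Real.hasDerivAt_cos x).sub ((((hasDerivAt_const x (1:ℝ)).sub
      ((hasDerivAt_pow 2 x).div_const 2)).add ((hasDerivAt_pow 4 x).div_const 24)).sub
      ((hasDerivAt_pow 6 x).div_const 720)))
    refine h.congr_deriv ?_; push_cast; ring
  · intro x hx; linarith [sin_le_taylor5 x hx]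

private lemma sin_ge_taylor7 : ∀ x : ℝ, 0 ≤ x →
    x - x ^ 3 / 6 + x ^ 5 / 120 - x ^ 7 / 5040 ≤ sin x := by
  have := chain_step (F := fun x => Real.sin x - (x - x ^ 3 / 6 + x ^ 5 / 120 - x ^ 7 / 5040))
    (F' := fun x => Real.cos x - (1 - x ^ 2 / 2 + x ^ 4 / 24 - x ^ 6 / 720)) ?_ (by norm_num) ?_
  · intro x hx; linarith [this x hx]
  · intro x
    have h := ((Real.hasDerivAt_sin x).sub (((((hasDerivAt_id x).sub
      ((hasDerivAt_pow 3 x).div_const 6)).add ((hasDerivAt_pow 5 x).div_const 120)).sub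
      ((hasDerivAt_pow 7 x).div_const 5040))))
    refine h.congr_deriv ?_; push_cast; ring
  · intro x hx; linarith [cos_ge_taylor6 x hx]

private lemma tan_low {x : ℝ} (hx : 0 ≤ x) (hx2 : x ≤ 2) :
    cos x * (x + x ^ 3 / 3 + 2 * x ^ 5 / 15) ≤ sin x := by
  have hP : 0 ≤ x + x ^ 3 / 3 + 2 * x ^ 5 / 15 := by positivity
  have h1 := sin_ge_taylor7 x hx
  have h2 := cos_le_taylor4 x hx
  have h3 : cos x * (x + x ^ 3 / 3 + 2 * x ^ 5 / 15) ≤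
      (1 - x ^ 2 / 2 + x ^ 4 / 24) * (x + x ^ 3 / 3 + 2 * x ^ 5 / 15) :=
    mul_le_mul_of_nonneg_right h2 hP
  have hsq : x ^ 2 ≤ 4 := by nlinarith
  have h9 : x ^ 9 ≤ 4 * x ^ 7 := by
    calc x ^ 9 = x ^ 7 * x ^ 2 := by ring
    _ ≤ x ^ 7 * 4 := mul_le_mul_of_nonneg_left hsq (pow_nonneg hx 7)
    _ = 4 * x ^ 7 := by ring
  linarith only [h1, h3, h9, pow_nonneg hx 7]

private lemma tan_high {x : ℝ} (hx : 0 ≤ x) (hx1 : x ≤ 1) :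
    sin x ≤ cos x * (x + x ^ 3 / 3 + 2 * x ^ 5 / 15) + x ^ 7 / 10 := by
  have hP : 0 ≤ x + x ^ 3 / 3 + 2 * x ^ 5 / 15 := by positivity
  have h1 := sin_le_taylor5 x hx
  have h2 := cos_ge_taylor6 x hx
  have h3 : (1 - x ^ 2 / 2 + x ^ 4 / 24 - x ^ 6 / 720) * (x + x ^ 3 / 3 + 2 * x ^ 5 / 15) ≤
      cos x * (x + x ^ 3 / 3 + 2 * x ^ 5 / 15) :=
    mul_le_mul_of_nonneg_right h2 hP
  have h9 : x ^ 9 ≤ x ^ 7 := pow_le_pow_of_le_one hx hx1 (by norm_num)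
  have h11 : x ^ 11 ≤ x ^ 7 := pow_le_pow_of_le_one hx hx1 (by norm_num)
  have h70 : (0:ℝ) ≤ x ^ 9 := pow_nonneg hx 9
  have h71 : (0:ℝ) ≤ x ^ 11 := pow_nonneg hx 11
  linarith only [h1, h3, h9, h11, h70, h71, pow_nonneg hx 7]

private lemma tan_cube {x : ℝ} (hx : 0 ≤ x) (hx1 : x ≤ 1) :
    sin x ≤ cos x * (x + x ^ 3) := by
  have hP : 0 ≤ x + x ^ 3 := by positivity
  have h1 := sin_le_taylor5 x hx
  have h2 := cos_ge_taylor6 x hx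
  have h3 : (1 - x ^ 2 / 2 + x ^ 4 / 24 - x ^ 6 / 720) * (x + x ^ 3) ≤ cos x * (x + x ^ 3) :=
    mul_le_mul_of_nonneg_right h2 hP
  have h5 : x ^ 5 ≤ x ^ 3 := pow_le_pow_of_le_one hx hx1 (by norm_num)
  have h7 : x ^ 7 ≤ x ^ 3 := pow_le_pow_of_le_one hx hx1 (by norm_num)
  have h9 : x ^ 9 ≤ x ^ 3 := pow_le_pow_of_le_one hx hx1 (by norm_num)
  have h30 : (0:ℝ) ≤ x ^ 3 := pow_nonneg hx 3
  have h70 : (0:ℝ) ≤ x ^ 7 := pow_nonneg hx 7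
  have h90 : (0:ℝ) ≤ x ^ 9 := pow_nonneg hx 9
  linarith only [h1, h3, h5, h7, h9, h30, h70, h90]

set_option maxHeartbeats 4000000 in
private lemma key_poly {t Y : ℝ} (ht : 0 < t) (ht' : t ≤ 1/1000) (hY : 0 < Y)
    (I1 : Y * (1-t)^3 / 3 + 2/15 * Y^2 * (1-t)^5 ≤ t)
    (I2 : t ≤ Y * (1-t)^3 / 3 + 2/15 * Y^2 * (1-t)^5 + Y^3 * (1-t)^7 / 5) :
    3*t*(1 + 9/5*t - 100*t^2) ≤ Y ∧ Y ≤ 3*t*(1 + 9/5*t + 100*t^2) := by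
  have ht1 : (0:ℝ) < 1 - t := by linarith
  have h3pos : (0:ℝ) < (1-t)^3 := by positivity
  have p2 : (0:ℝ) < t^2 := by positivity
  have p3 : (0:ℝ) < t^3 := by positivity
  have p4 : (0:ℝ) < t^4 := by positivity
  have p5 : (0:ℝ) < t^5 := by positivity
  have p6 : (0:ℝ) < t^6 := by positivity
  have m2 : t^2 ≤ t/1000 := by linarith only [mul_le_mul_of_nonneg_left ht' ht.le]
  have m3 : t^3 ≤ t^2/1000 := by linarith only [mul_le_mul_of_nonneg_left ht' p2.le]
  have m4 : t^4 ≤ t^3/1000 := by linarith only [mul_le_mul_of_nonneg_left ht' p3.le]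
  have m5 : t^5 ≤ t^4/1000 := by linarith only [mul_le_mul_of_nonneg_left ht' p4.le]
  have m6 : t^6 ≤ t^5/1000 := by linarith only [mul_le_mul_of_nonneg_left ht' p5.le]
  have pow5le : ((1:ℝ)-t)^5 ≤ 1 := pow_le_one₀ ht1.le (by linarith)
  have pow7le : ((1:ℝ)-t)^7 ≤ 1 := pow_le_one₀ ht1.le (by linarith)
  have e2 : (0:ℝ) ≤ 2/15 * Y^2 * (1-t)^5 := by positivity
  -- crude upper bound
  have s3' : Y ≤ 31/10 * t := by
    have h1 : Y * (1-t)^3 ≤ 3*t := by linarith only [I1, e2]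
    have h2 : 3*t ≤ 31/10*t * (1-t)^3 := by linarith only [m2, m4, p3, ht]
    have := h1.trans h2
    exact le_of_mul_le_mul_right this h3pos
  -- crude lower bound
  have s4 : 3*t*(1-2*t) ≤ Y := by
    have e1 : Y * (1-t)^3 ≤ Y := by
      linarith only [mul_le_mul_of_nonneg_left (pow_le_one₀ ht1.le (by linarith : (1:ℝ)-t ≤ 1) (n := 3)) hY.le]
    have e2' : Y^2 * (1-t)^5 ≤ Y^2 := by
      linarith only [mul_le_mul_of_nonneg_left pow5le (sq_nonneg Y)]
    have e3 : Y^3 * (1-t)^7 ≤ Y^3 := by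
      linarith only [mul_le_mul_of_nonneg_left pow7le (pow_pos hY 3).le]
    have e4 : Y^2 ≤ 31/10*t*Y := by linarith only [mul_le_mul_of_nonneg_left s3' hY.le]
    have e5 : Y^3 ≤ 961/100*t^2*Y := by
      have h1 : Y*Y ≤ (31/10*t)*(31/10*t) := mul_le_mul s3' s3' hY.le (by positivity)
      have h2 : (Y*Y)*Y ≤ ((31/10*t)*(31/10*t))*Y := mul_le_mul_of_nonneg_right h1 hY.le
      linarith only [h2]
    have htY : t^2*Y ≤ (t/1000)*Y := mul_le_mul_of_nonneg_right m2 hY.le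
    have hup : t ≤ Y/3 + 1/2*(t*Y) := by linarith only [I2, e1, e2', e3, e4, e5, htY, mul_pos ht hY]
    have hden : (0:ℝ) < 1/3 + 1/2*t := by linarith
    have hdiv : 3*t*(1-2*t) * (1/3 + 1/2*t) ≤ Y * (1/3 + 1/2*t) := by
      have : 3*t*(1-2*t) * (1/3 + 1/2*t) ≤ t := by linarith only [p2, p3]
      linarith only [this, hup]
    exact le_of_mul_le_mul_right hdiv hden
  -- refined upper bound
  have s5 : Y ≤ 3*t*(1 + 9/5*t + 100*t^2) := by
    have h0 : (0:ℝ) ≤ 3*t*(1-2*t) := by nlinarith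
    have hY2 : 9*t^2*(1-2*t)^2 ≤ Y^2 := by linarith only [mul_self_le_mul_self h0 s4]
    have h15 : (1:ℝ) - 5*t ≤ (1-t)^5 := by linarith only [m3, m5, p2, p4]
    have hA : (0:ℝ) ≤ 9*t^2*(1-2*t)^2 := by positivity
    have hb1 : 2/15 * (9*t^2*(1-2*t)^2) * (1-5*t) ≤ 2/15 * (9*t^2*(1-2*t)^2) * (1-t)^5 := by
      linarith only [mul_le_mul_of_nonneg_left h15 hA]
    have hb2 : 2/15 * (9*t^2*(1-2*t)^2) * (1-t)^5 ≤ 2/15 * Y^2 * (1-t)^5 := by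
      linarith only [mul_le_mul_of_nonneg_right hY2 (by positivity : (0:ℝ) ≤ (1-t)^5)]
    have h1 : Y * (1-t)^3 ≤ 3*t - 2/5 * (9*t^2*(1-2*t)^2) * (1-5*t) := by
      linarith only [I1, hb1, hb2]
    have h2 : 3*t - 2/5 * (9*t^2*(1-2*t)^2) * (1-5*t) ≤ 3*t*(1 + 9/5*t + 100*t^2) * (1-t)^3 := by
      linarith only [m4, m6, p3, p5]
    exact le_of_mul_le_mul_right (h1.trans h2) h3pos
  refine ⟨?_, s5⟩
  -- refined lower bound
  have sY2 : Y ≤ 3*t*(1+2*t) := by linarith only [s5, m3, p2]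
  have h0 : (0:ℝ) ≤ 3*t*(1+2*t) := by positivity
  have hY2 : Y^2 ≤ 9*t^2*(1+2*t)^2 := by linarith only [mul_self_le_mul_self hY.le sY2]
  have hY3 : Y^3 ≤ 28*t^3 := by
    have h1 : Y^3 ≤ (3*t*(1+2*t))^3 := pow_le_pow_left₀ hY.le sY2 3
    linarith only [h1, m4, m5, m6, p4, p5, p6]
  have e2' : 2/15 * Y^2 * (1-t)^5 ≤ 2/15 * (9*t^2*(1+2*t)^2) := by
    linarith only [mul_le_mul_of_nonneg_left pow5le (sq_nonneg Y), hY2]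
  have e3' : Y^3 * (1-t)^7 / 5 ≤ 28*t^3/5 := by
    linarith only [mul_le_mul_of_nonneg_left pow7le (pow_pos hY 3).le, hY3]
  have h1 : t - 6/5*t^2*(1+2*t)^2 - 28/5*t^3 ≤ Y * (1-t)^3 / 3 := by
    linarith only [I2, e2', e3']
  have h2 : 3*t*(1 + 9/5*t - 100*t^2) * (1-t)^3 ≤ 3 * (t - 6/5*t^2*(1+2*t)^2 - 28/5*t^3) := by
    linarith only [m4, m6, p3, p5]
  have h3 : 3*t*(1 + 9/5*t - 100*t^2) * (1-t)^3 ≤ Y * (1-t)^3 := by linarith only [h1, h2]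
  exact le_of_mul_le_mul_right h3 h3pos

set_option maxHeartbeats 2000000 in
/-- Asymptotics of the smallest positive solution of `kNℓ = tan(k(Nℓ − a₀))` in the regime
`a₀/(Nℓ) → 0`. -/
theorem smallest_tan_root_asymptotics (a₀ ℓ : ℝ) (ha : 0 < a₀) (hℓ : 0 < ℓ) :
    ∃ C > 0, ∃ ε > 0, ∀ N : ℝ, 0 < N → a₀ / (N * ℓ) < ε →
      ∀ k : ℝ, 0 < k →
        k * (N * ℓ) = Real.tan (k * (N * ℓ - a₀)) →
        (∀ k' : ℝ, 0 < k' → k' * (N * ℓ) = Real.tan (k' * (N * ℓ - a₀)) → k ≤ k') →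
        (3 * a₀ / (N * ℓ) ^ 3) * (1 + (9 / 5) * (a₀ / (N * ℓ)) - C * (a₀ / (N * ℓ)) ^ 2)
            ≤ k ^ 2 ∧
          k ^ 2 ≤ (3 * a₀ / (N * ℓ) ^ 3)
            * (1 + (9 / 5) * (a₀ / (N * ℓ)) + C * (a₀ / (N * ℓ)) ^ 2) := by
  refine ⟨100, by norm_num, 1/1000, by norm_num, ?_⟩
  intro N hN htsmall k hk heq hmin
  set L : ℝ := N * ℓ with hLdef
  have hL : 0 < L := mul_pos hN hℓ
  set t : ℝ := a₀ / L with htdef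
  have ht0 : 0 < t := div_pos ha hL
  have haL : 1000 * a₀ < L := by
    have := (div_lt_iff₀ hL).mp htsmall; linarith
  have hML : 0 < L - a₀ := by linarith
  set δ : ℝ := a₀ / (L - a₀) with hδdef
  have hδ0 : 0 < δ := div_pos ha hML
  have hδ' : δ ≤ 1/999 := by
    rw [hδdef, div_le_div_iff₀ hML (by norm_num)]; linarith
  clear_value L t δ
  -- the comparison point u₁
  set u₁ : ℝ := Real.sqrt δ with hu₁def
  have hu₁0 : 0 < u₁ := Real.sqrt_pos.mpr hδ0
  have hu₁sq : u₁ ^ 2 = δ := Real.sq_sqrt hδ0.le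
  clear_value u₁
  have hu₁1 : u₁ ≤ 1 := by
    rw [hu₁def]; rw [show (1:ℝ) = Real.sqrt 1 by simp]
    exact Real.sqrt_le_sqrt (by linarith)
  have hpi : (3.141592:ℝ) < π := Real.pi_gt_d6
  have hpi' : π < 3.15 := by linarith [Real.pi_lt_d2]
  -- tan u₁ ≤ (L/(L-a₀)) * u₁
  have hcosu₁ : 0 < Real.cos u₁ := Real.cos_pos_of_mem_Ioo ⟨by linarith, by linarith⟩
  have htanu₁ : Real.tan u₁ ≤ L / (L - a₀) * u₁ := by
    have h := tan_cube hu₁0.le hu₁1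
    have h2 : Real.tan u₁ ≤ u₁ + u₁ ^ 3 := by
      rw [Real.tan_eq_sin_div_cos, div_le_iff₀ hcosu₁]
      linarith only [h]
    have h3 : u₁ + u₁ ^ 3 = (1 + δ) * u₁ := by
      have : u₁ ^ 3 = δ * u₁ := by rw [← hu₁sq]; ring
      linarith [this]
    have h4 : (1 + δ) * u₁ = L / (L - a₀) * u₁ := by
      rw [hδdef]; field_simp; ring
    linarith
  -- a point d with large tangent
  obtain ⟨d, hd1, hdlt, hdtan⟩ : ∃ d : ℝ, 1 < d ∧ d < π/2 ∧ 2 ≤ Real.tan d := by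
    have h := Real.tendsto_tan_pi_div_two
    have h2 : ∀ᶠ u in nhdsWithin (π/2) (Set.Iio (π/2)), 2 ≤ Real.tan u :=
      h.eventually (Filter.eventually_ge_atTop 2)
    have h3 : ∀ᶠ u in nhdsWithin (π/2) (Set.Iio (π/2)), u ∈ Set.Ioo 1 (π/2) := by
      apply Filter.eventually_of_mem (Ioo_mem_nhdsLT (show (1:ℝ) < π/2 by linarith))
      exact fun u hu => hu
    obtain ⟨d, hd2, hd3⟩ := (h2.and h3).exists
    exact ⟨d, hd3.1, hd3.2, hd2⟩
  have hu₁d : u₁ ≤ d := by linarith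
  -- IVT to get an actual root u₀
  have hcont : ContinuousOn (fun u => Real.tan u - L / (L - a₀) * u) (Set.Icc u₁ d) := by
    apply ContinuousOn.sub
    · intro u hu
      apply ContinuousAt.continuousWithinAt
      apply Real.continuousAt_tan.mpr
      have : 0 < Real.cos u :=
        Real.cos_pos_of_mem_Ioo ⟨by cases hu; linarith, by cases hu; linarith⟩
      linarith
    · exact (continuous_const.mul continuous_id).continuousOn
  have hr2 : L / (L - a₀) ≤ 1000/999 := by
    rw [div_le_div_iff₀ hML (by norm_num)]; linarith
  have hr0 : 0 < L / (L - a₀) := div_pos hL hML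
  have hfd : 0 ≤ Real.tan d - L / (L - a₀) * d := by
    have : L / (L - a₀) * d ≤ 1000/999 * (3.15/2) := by
      apply mul_le_mul hr2 (by linarith) (by linarith) (by norm_num)
    linarith only [this, hdtan]
  have hfu₁ : Real.tan u₁ - L / (L - a₀) * u₁ ≤ 0 := by linarith
  obtain ⟨u₀, hu₀mem, hu₀⟩ : ∃ u₀ ∈ Set.Icc u₁ d,
      (fun u => Real.tan u - L / (L - a₀) * u) u₀ = 0 := by
    have := intermediate_value_Icc hu₁d hcont
    have h0 : (0:ℝ) ∈ Set.Icc (Real.tan u₁ - L / (L - a₀) * u₁)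
        (Real.tan d - L / (L - a₀) * d) := ⟨hfu₁, hfd⟩
    obtain ⟨u₀, hmem, hval⟩ := this h0
    exact ⟨u₀, hmem, hval⟩
  simp only at hu₀
  have hu₀tan : Real.tan u₀ = L / (L - a₀) * u₀ := by linarith
  have hu₀pos : 0 < u₀ := lt_of_lt_of_le hu₁0 hu₀mem.1
  have hu₀lt : u₀ < π/2 := lt_of_le_of_lt hu₀mem.2 hdlt
  -- the competitor root k₀
  have hk₀ : k ≤ u₀ / (L - a₀) := by
    apply hmin
    · positivity
    · have h1 : u₀ / (L - a₀) * (L - a₀) = u₀ := by field_simp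
      rw [h1, hu₀tan]; ring
  -- x = k (L - a₀) lies in (0, π/2)
  set x : ℝ := k * (L - a₀) with hxdef
  clear_value x
  have hx0 : 0 < x := by rw [hxdef]; exact mul_pos hk hML
  have hxu₀ : x ≤ u₀ := by
    rw [hxdef]
    calc k * (L - a₀) ≤ u₀ / (L - a₀) * (L - a₀) :=
          mul_le_mul_of_nonneg_right hk₀ hML.le
    _ = u₀ := by field_simp
  have hxlt : x < π/2 := lt_of_le_of_lt hxu₀ hu₀lt
  have hcosx : 0 < Real.cos x := Real.cos_pos_of_mem_Ioo ⟨by linarith, hxlt⟩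
  have hsc : Real.sin x = k * L * Real.cos x := by
    have h := heq
    rw [Real.tan_eq_sin_div_cos, eq_div_iff hcosx.ne'] at h
    linarith
  have hkL0 : 0 < k * L := mul_pos hk hL
  -- lower bound on k L
  have hP : x + x ^ 3 / 3 + 2 * x ^ 5 / 15 ≤ k * L := by
    have h := tan_low hx0.le (by linarith)
    rw [hsc] at h
    exact le_of_mul_le_mul_right (by linarith only [h] :
      (x + x ^ 3 / 3 + 2 * x ^ 5 / 15) * Real.cos x ≤ k * L * Real.cos x) hcosx
  -- x is small
  have hxδ : x * δ = k * a₀ := by rw [hxdef, hδdef]; field_simp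
  have hkLx : k * L = x + x * δ := by rw [hxδ]; rw [hxdef]; ring
  have h5pos : (0:ℝ) < x ^ 5 := pow_pos hx0 5
  have hcube : x * x ^ 2 ≤ x * (3 * δ) := by linarith only [hP, hkLx, h5pos]
  have hxsq : x ^ 2 ≤ 3 * δ := le_of_mul_le_mul_left hcube hx0
  have hx1 : x ≤ 1 := by
    by_contra hcon
    push_neg at hcon
    have h2 : (1:ℝ) < x ^ 2 := one_lt_pow₀ hcon (by norm_num)
    linarith only [hxsq, hδ', h2]
  -- upper bound on k L
  have hQ : k * L ≤ x + x ^ 3 / 3 + 2 * x ^ 5 / 15 + x ^ 7 / 5 := by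
    have h := tan_high hx0.le hx1
    rw [hsc] at h
    have hhalf : (1/2 : ℝ) ≤ Real.cos x := by
      have := Real.one_sub_sq_div_two_le_cos (x := x)
      linarith only [this, hxsq, hδ']
    rcases le_or_gt (k * L) (x + x ^ 3 / 3 + 2 * x ^ 5 / 15) with hc | hc
    · linarith only [hc, pow_pos hx0 7]
    · have hd1 : (k * L - (x + x ^ 3 / 3 + 2 * x ^ 5 / 15)) * (1/2)
          ≤ (k * L - (x + x ^ 3 / 3 + 2 * x ^ 5 / 15)) * Real.cos x :=
        mul_le_mul_of_nonneg_left hhalf (by linarith)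
      linarith only [h, hd1]
  -- translate into the polynomial inequalities
  have hx_eq : x = k * L * (1 - t) := by
    rw [hxdef, htdef]; field_simp
  have ht1000 : t ≤ 1/1000 := le_of_lt htsmall
  have hI1 : (k*L)^2 * (1-t)^3 / 3 + 2/15 * ((k*L)^2)^2 * (1-t)^5 ≤ t := by
    rw [hx_eq] at hP
    refine le_of_mul_le_mul_left ?_ hkL0
    have hgoal : k*L * ((k*L)^2 * (1-t)^3 / 3 + 2/15 * ((k*L)^2)^2 * (1-t)^5) ≤ k*L * t := by
      linarith only [hP]
    exact hgoal
  have hI2 : t ≤ (k*L)^2 * (1-t)^3 / 3 + 2/15 * ((k*L)^2)^2 * (1-t)^5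
      + ((k*L)^2)^3 * (1-t)^7 / 5 := by
    rw [hx_eq] at hQ
    refine le_of_mul_le_mul_left ?_ hkL0
    have hgoal : k*L * t ≤ k*L * ((k*L)^2 * (1-t)^3 / 3 + 2/15 * ((k*L)^2)^2 * (1-t)^5
        + ((k*L)^2)^3 * (1-t)^7 / 5) := by
      linarith only [hQ]
    exact hgoal
  obtain ⟨hlo, hhi⟩ := key_poly ht0 ht1000 (by positivity : (0:ℝ) < (k*L)^2) hI1 hI2
  rw [mul_pow] at hlo hhi
  have hL2 : (0:ℝ) < L ^ 2 := by positivity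
  constructor
  · have e : 3 * a₀ / L ^ 3 * (1 + 9 / 5 * t - 100 * t ^ 2)
        = 3*t*(1 + 9/5*t - 100*t^2) / L^2 := by rw [htdef]; ring
    rw [e, div_le_iff₀ hL2]
    linarith only [hlo]
  · have e : 3 * a₀ / L ^ 3 * (1 + 9 / 5 * t + 100 * t ^ 2)
        = 3*t*(1 + 9/5*t + 100*t^2) / L^2 := by rw [htdef]; ring
    rw [e, le_div_iff₀ hL2]
    linarith only [hhi]
end

section
/- Let m_λ : [0, Nℓ] → ℝ be given for r ∈ (R, Nℓ] by m_λ(r) = λ^{−1/2} sin(λ^{1/2}(r − Nℓ)) + Nℓ cos(λ^{1/2}(r − Nℓ)), where λ = (3a₀/(Nℓ)³)(1 + O(a₀/(Nℓ))). Then, as a₀/(Nℓ) → 0, m_λ(r) = r − a₀ + (3/2)(a₀/(Nℓ)) r − (1/2)(a₀/(Nℓ)³) r³ + O(a₀²/(Nℓ)) uniformly for r ∈ (R, Nℓ]. -/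
private lemma mvt_abs (f f' : ℝ → ℝ) (hf : ∀ t, HasDerivAt f (f' t) t) (h0 : f 0 = 0)
    (x B : ℝ) (hB : ∀ t, |t| ≤ |x| → |f' t| ≤ B) : |f x| ≤ B * |x| := by
  have hs : Convex ℝ (Set.Icc (-|x|) |x|) := convex_Icc _ _
  have h := hs.norm_image_sub_le_of_norm_hasDerivWithin_le
    (f := f) (f' := f') (C := B)
    (fun t _ => (hf t).hasDerivWithinAt)
    (fun t ht => hB t (abs_le.2 ⟨ht.1, ht.2⟩))
    (x := 0) (y := x)
    ⟨neg_nonpos.2 (abs_nonneg x), abs_nonneg x⟩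
    ⟨neg_abs_le x, le_abs_self x⟩
  simpa [h0, Real.norm_eq_abs] using h

private lemma sin_taylor1 (x : ℝ) : |Real.sin x - x| ≤ |x| ^ 3 / 2 := by
  have h := mvt_abs (fun t => Real.sin t - t) (fun t => Real.cos t - 1)
    (fun t => (Real.hasDerivAt_sin t).sub (hasDerivAt_id t)) (by simp) x (|x| ^ 2 / 2) ?_
  · calc |Real.sin x - x| ≤ |x| ^ 2 / 2 * |x| := h
      _ = |x| ^ 3 / 2 := by ring
  · intro t ht
    have h1 : Real.cos t ≤ 1 := Real.cos_le_one t
    have h2 : 1 - t ^ 2 / 2 ≤ Real.cos t := Real.one_sub_sq_div_two_le_cos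
    have h3 : t ^ 2 ≤ |x| ^ 2 := by
      have := sq_abs t
      nlinarith [abs_nonneg t, abs_nonneg x]
    rw [abs_le]; constructor <;> nlinarith

private lemma cos_taylor2 (x : ℝ) : |Real.cos x - (1 - x ^ 2 / 2)| ≤ |x| ^ 4 / 2 := by
  have h := mvt_abs (fun t => Real.cos t - (1 - t ^ 2 / 2)) (fun t => -(Real.sin t - t))
    (fun t => by
      have : HasDerivAt (fun t : ℝ => Real.cos t - (1 - t ^ 2 / 2)) (-Real.sin t - (0 - 2 * t ^ 1 / 2)) t := by
        exact (Real.hasDerivAt_cos t).sub ((hasDerivAt_const t (1:ℝ)).sub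
          (((hasDerivAt_pow 2 t)).div_const 2))
      convert this using 1; ring)
    (by simp) x (|x| ^ 3 / 2) ?_
  · calc |Real.cos x - (1 - x ^ 2 / 2)| ≤ |x| ^ 3 / 2 * |x| := h
      _ = |x| ^ 4 / 2 := by ring
  · intro t ht
    have h1 := sin_taylor1 t
    have h3 : |t| ^ 3 ≤ |x| ^ 3 := by
      exact pow_le_pow_left₀ (abs_nonneg t) ht 3
    rw [abs_neg]
    nlinarith

private lemma sin_taylor2 (x : ℝ) : |Real.sin x - (x - x ^ 3 / 6)| ≤ |x| ^ 5 / 2 := by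
  have h := mvt_abs (fun t => Real.sin t - (t - t ^ 3 / 6)) (fun t => Real.cos t - (1 - t ^ 2 / 2))
    (fun t => by
      have : HasDerivAt (fun t : ℝ => Real.sin t - (t - t ^ 3 / 6))
          (Real.cos t - (1 - 3 * t ^ 2 / 6)) t := by
        exact (Real.hasDerivAt_sin t).sub ((hasDerivAt_id t).sub
          (((hasDerivAt_pow 3 t)).div_const 6))
      convert this using 1; ring)
    (by simp) x (|x| ^ 4 / 2) ?_
  · calc |Real.sin x - (x - x ^ 3 / 6)| ≤ |x| ^ 4 / 2 * |x| := h
      _ = |x| ^ 5 / 2 := by ring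
  · intro t ht
    have h1 := cos_taylor2 t
    have h3 : |t| ^ 4 ≤ |x| ^ 4 := pow_le_pow_left₀ (abs_nonneg t) ht 4
    nlinarith
set_option maxHeartbeats 2000000 in
/-- Uniform Taylor expansion of the explicit Neumann solution
`m_λ(r) = λ^{−1/2} sin(√λ(r − Nℓ)) + Nℓ cos(√λ(r − Nℓ))` in the regime `a₀/(Nℓ) → 0`,
where `λ = (3a₀/(Nℓ)³)(1 + O(a₀/(Nℓ)))`. -/
theorem neumann_solution_expansion (a₀ R D : ℝ) (ha : 0 < a₀) (hR : 0 < R) (hD : 0 < D) :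
    ∃ C > 0, ∃ ε > 0, ∀ N ℓ : ℝ, 0 < N → 0 < ℓ → R < N * ℓ → a₀ / (N * ℓ) < ε →
      ∀ lam : ℝ, 0 < lam →
        |lam - 3 * a₀ / (N * ℓ) ^ 3| ≤ D * (a₀ / (N * ℓ)) * (3 * a₀ / (N * ℓ) ^ 3) →
        ∀ r ∈ Set.Ioc R (N * ℓ),
          |(Real.sqrt lam)⁻¹ * Real.sin (Real.sqrt lam * (r - N * ℓ))
              + N * ℓ * Real.cos (Real.sqrt lam * (r - N * ℓ))
              - (r - a₀ + (3 / 2) * (a₀ / (N * ℓ)) * r - (1 / 2) * (a₀ / (N * ℓ) ^ 3) * r ^ 3)|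
            ≤ C * a₀ ^ 2 / (N * ℓ) := by
  refine ⟨3 * D + 9 * (1 + D) ^ 2 + 1, by positivity, 1, one_pos, ?_⟩
  intro N ℓ hN hℓ hRL hε lam hlam hlamD r hr
  set L := N * ℓ with hLdef
  have hL : 0 < L := lt_trans hR hRL
  obtain ⟨hr1, hr2⟩ := hr
  have hr0 : 0 < r := lt_trans hR hr1
  set s := Real.sqrt lam with hsdef
  have hs : 0 < s := Real.sqrt_pos.2 hlam
  have hs2 : s ^ 2 = lam := Real.sq_sqrt hlam.le
  set x := r - L with hxdef
  have hxabs : |x| ≤ L := by rw [abs_le]; constructor <;> nlinarith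
  set y := s * x with hy
  set δ₁ := Real.sin y - (y - y ^ 3 / 6) with hd1
  set δ₂ := Real.cos y - (1 - y ^ 2 / 2) with hd2
  have hb1 : |δ₁| ≤ |y| ^ 5 / 2 := sin_taylor2 y
  have hb2 : |δ₂| ≤ |y| ^ 4 / 2 := cos_taylor2 y
  have hyabs : |y| ≤ s * L := by
    rw [hy, abs_mul, abs_of_pos hs]
    exact mul_le_mul_of_nonneg_left hxabs hs.le
  have hsL : 0 ≤ s * L := by positivity
  clear_value L s x y δ₁ δ₂
  -- the algebraic identity
  have key : s⁻¹ * Real.sin y + L * Real.cos y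
      - (r - a₀ + 3 / 2 * (a₀ / L) * r - 1 / 2 * (a₀ / L ^ 3) * r ^ 3)
      = -((lam - 3 * a₀ / L ^ 3) * (r ^ 3 / 3 - L ^ 2 * r + 2 * L ^ 3 / 3) / 2)
        + δ₁ * s⁻¹ + L * δ₂ := by
    rw [hd1, hd2, hy, hxdef, ← hs2]
    field_simp
    ring
  rw [key]
  have hq1 : a₀ / L < 1 := hε
  -- term 1
  have hP : |r ^ 3 / 3 - L ^ 2 * r + 2 * L ^ 3 / 3| ≤ 2 * L ^ 3 := by
    have hP0 : 0 ≤ r ^ 3 / 3 - L ^ 2 * r + 2 * L ^ 3 / 3 := by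
      nlinarith [mul_nonneg (sq_nonneg (L - r)) (by linarith : (0:ℝ) ≤ r + 2 * L)]
    have hr3 : r ^ 3 ≤ L ^ 3 := pow_le_pow_left₀ hr0.le hr2 3
    have hL2r : 0 ≤ L ^ 2 * r := by positivity
    have hL3 : 0 < L ^ 3 := pow_pos hL 3
    rw [abs_le]
    constructor
    · linarith
    · linarith
  have heq1 : D * (a₀ / L) * (3 * a₀ / L ^ 3) = 3 * D * a₀ ^ 2 / L ^ 4 := by
    field_simp
  have hlamμ : |lam - 3 * a₀ / L ^ 3| ≤ 3 * D * a₀ ^ 2 / L ^ 4 := heq1 ▸ hlamD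
  have hA : |(lam - 3 * a₀ / L ^ 3) * (r ^ 3 / 3 - L ^ 2 * r + 2 * L ^ 3 / 3) / 2|
      ≤ 3 * D * a₀ ^ 2 / L := by
    rw [abs_div, abs_mul, abs_two]
    have h1 : |lam - 3 * a₀ / L ^ 3| * |r ^ 3 / 3 - L ^ 2 * r + 2 * L ^ 3 / 3|
        ≤ (3 * D * a₀ ^ 2 / L ^ 4) * (2 * L ^ 3) := by
      gcongr
    have h2 : (3 * D * a₀ ^ 2 / L ^ 4) * (2 * L ^ 3) / 2 = 3 * D * a₀ ^ 2 / L := by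
      field_simp
    linarith
  -- lam bound
  have hlamL : lam * L ^ 3 ≤ 3 * (1 + D) * a₀ := by
    have h1 : lam - 3 * a₀ / L ^ 3 ≤ 3 * D * a₀ ^ 2 / L ^ 4 := (abs_le.1 hlamμ).2
    have h2 : (3 * a₀ / L ^ 3) * L ^ 3 = 3 * a₀ := by field_simp
    have h3 : (3 * D * a₀ ^ 2 / L ^ 4) * L ^ 3 = 3 * D * a₀ * (a₀ / L) := by
      field_simp
    have h4 := mul_le_mul_of_nonneg_right (by linarith :
      lam ≤ 3 * a₀ / L ^ 3 + 3 * D * a₀ ^ 2 / L ^ 4) (by positivity : (0:ℝ) ≤ L ^ 3)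
    rw [add_mul, h2, h3] at h4
    nlinarith [mul_nonneg (mul_nonneg hD.le ha.le) (by linarith : (0:ℝ) ≤ 1 - a₀ / L)]
  have hlam2 : lam ^ 2 * L ^ 5 ≤ 9 * (1 + D) ^ 2 * a₀ ^ 2 / L := by
    rw [le_div_iff₀ hL]
    have h0 : 0 ≤ lam * L ^ 3 := by positivity
    nlinarith [hlamL, h0]
  -- terms 2 and 3
  have hB : |δ₁ * s⁻¹| ≤ lam ^ 2 * L ^ 5 / 2 := by
    rw [abs_mul, abs_inv, abs_of_pos hs]
    have h1 : |δ₁| ≤ (s * L) ^ 5 / 2 := hb1.trans (by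
      have := pow_le_pow_left₀ (abs_nonneg y) hyabs 5
      linarith)
    have h2 : (s * L) ^ 5 / 2 * s⁻¹ = s ^ 4 * L ^ 5 / 2 := by
      field_simp
    have h3 : s ^ 4 = lam ^ 2 := by rw [← hs2]; ring
    calc |δ₁| * s⁻¹ ≤ (s * L) ^ 5 / 2 * s⁻¹ := by gcongr
      _ = lam ^ 2 * L ^ 5 / 2 := by rw [h2, h3]
  have hC : |L * δ₂| ≤ lam ^ 2 * L ^ 5 / 2 := by
    rw [abs_mul, abs_of_pos hL]
    have h1 : |δ₂| ≤ (s * L) ^ 4 / 2 := hb2.trans (by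
      have := pow_le_pow_left₀ (abs_nonneg y) hyabs 4
      linarith)
    have h3 : s ^ 4 = lam ^ 2 := by rw [← hs2]; ring
    calc L * |δ₂| ≤ L * ((s * L) ^ 4 / 2) := by gcongr
      _ = lam ^ 2 * L ^ 5 / 2 := by rw [← h3]; ring
  -- combine
  have tri : |-((lam - 3 * a₀ / L ^ 3) * (r ^ 3 / 3 - L ^ 2 * r + 2 * L ^ 3 / 3) / 2)
      + δ₁ * s⁻¹ + L * δ₂|
      ≤ |(lam - 3 * a₀ / L ^ 3) * (r ^ 3 / 3 - L ^ 2 * r + 2 * L ^ 3 / 3) / 2|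
        + |δ₁ * s⁻¹| + |L * δ₂| := by
    calc _ ≤ |-((lam - 3 * a₀ / L ^ 3) * (r ^ 3 / 3 - L ^ 2 * r + 2 * L ^ 3 / 3) / 2)
        + δ₁ * s⁻¹| + |L * δ₂| := abs_add_le _ _
      _ ≤ _ := by
        have := abs_add_le (-((lam - 3 * a₀ / L ^ 3) * (r ^ 3 / 3 - L ^ 2 * r + 2 * L ^ 3 / 3) / 2))
          (δ₁ * s⁻¹)
        rw [abs_neg] at this
        linarith
  have hsum : 3 * D * a₀ ^ 2 / L + lam ^ 2 * L ^ 5 / 2 + lam ^ 2 * L ^ 5 / 2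
      ≤ (3 * D + 9 * (1 + D) ^ 2 + 1) * a₀ ^ 2 / L := by
    have h1 : 3 * D * a₀ ^ 2 / L + 9 * (1 + D) ^ 2 * a₀ ^ 2 / L
        ≤ (3 * D + 9 * (1 + D) ^ 2 + 1) * a₀ ^ 2 / L := by
      rw [← add_div, div_le_div_iff₀ hL hL]
      nlinarith
    linarith
  linarith [tri, hA, hB, hC, hsum]
end
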